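/- arXiv:1207.1199 — 3 statements merged into one kernel-verified Lean document; each statement's English description precedes it below -/
import Mathlib

section
/- Let $G$ be a group, $H \leq G$ a subgroup, and $1 \leq p < \infty$. If there exists a thin invariant exhaustion of $\ell^p H$, then there exists a thin invariant exhaustion of $\ell^p G$. -/
open scoped ENNReal
open scoped Classical

/-- Left translation by `g` on `ℓ^p(G)`: `(g ⬝ f)(x) = f(g⁻¹ x)`. -/
noncomputable def lpTranslate {G : Type*} [Group G] {p : ℝ≥0∞} (g : G)
    (f : lp (fun _ : G => ℂ) p) : lp (fun _ : G => ℂ) p :=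
  ⟨fun x => f (g⁻¹ * x), by
    show Memℓp (fun x : G => f (g⁻¹ * x)) p
    have h : Memℓp (f : ∀ _ : G, ℂ) p := lp.memℓp f
    rcases p.trichotomy with rfl | rfl | hp
    · rw [memℓp_zero_iff] at h ⊢
      exact h.preimage ((Equiv.mulLeft g⁻¹).injective.injOn)
    · rw [memℓp_infty_iff] at h ⊢
      have : Set.range (fun x : G => ‖f (g⁻¹ * x)‖) = Set.range (fun x : G => ‖f x‖) :=
        (Equiv.mulLeft g⁻¹).surjective.range_comp (fun x => ‖f x‖)
      rw [this]; exact h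
    · rw [memℓp_gen_iff hp] at h ⊢
      exact ((Equiv.mulLeft g⁻¹).summable_iff (f := fun x => ‖f x‖ ^ p.toReal)).2 h⟩

/-- `(E i)` is a thin invariant exhaustion of `ℓ^p(G)`: an increasing sequence of
closed `G`-invariant subspaces with dense union, such that some nonzero closed
`G`-invariant subspace `F` meets every `E i` trivially. -/
def IsThinInvariantExhaustion {G : Type*} [Group G] (p : ℝ≥0∞) [Fact (1 ≤ p)]
    (E : ℕ → Submodule ℂ (lp (fun _ : G => ℂ) p)) : Prop :=
  (∀ i, IsClosed (E i : Set (lp (fun _ : G => ℂ) p))) ∧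
  Monotone E ∧
  (∀ i (g : G), ∀ f ∈ E i, lpTranslate g f ∈ E i) ∧
  Dense (⋃ i, (E i : Set (lp (fun _ : G => ℂ) p))) ∧
  ∃ F : Submodule ℂ (lp (fun _ : G => ℂ) p),
    IsClosed (F : Set (lp (fun _ : G => ℂ) p)) ∧
    (∀ (g : G), ∀ f ∈ F, lpTranslate g f ∈ F) ∧
    F ≠ ⊥ ∧ ∀ i, E i ⊓ F = ⊥

section Aux

variable {G : Type*} [Group G] (H : Subgroup G) {p : ℝ≥0∞}

private lemma coset_inj (x : G) : Function.Injective (fun h : H => x * (h : G)) := by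
  intro a b hab
  exact Subtype.ext (mul_left_cancel hab)

private lemma memℓp_res (x : G) (f : lp (fun _ : G => ℂ) p) :
    Memℓp (fun h : H => f (x * h)) p := by
  have h : Memℓp (f : ∀ _ : G, ℂ) p := lp.memℓp f
  rcases p.trichotomy with rfl | rfl | hp
  · rw [memℓp_zero_iff] at h ⊢
    exact h.preimage ((coset_inj H x).injOn)
  · rw [memℓp_infty_iff] at h ⊢
    exact h.mono (Set.range_comp_subset_range (fun h : H => x * (h : G)) (fun g => ‖f g‖))
  · rw [memℓp_gen_iff hp] at h ⊢
    exact h.comp_injective (coset_inj H x)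

/-- Restriction of an element of `ℓ^p(G)` to the left coset `xH`, as a function on `H`. -/
noncomputable def resL (x : G) :
    lp (fun _ : G => ℂ) p →ₗ[ℂ] lp (fun _ : H => ℂ) p where
  toFun f := ⟨fun h : H => f (x * h), memℓp_res H x f⟩
  map_add' f g := by
    ext h
    simp [lp.coeFn_add]
    rfl
  map_smul' c f := by
    ext h
    simp [lp.coeFn_smul]

@[simp] lemma resL_apply (x : G) (f : lp (fun _ : G => ℂ) p) (h : H) :
    (resL H x f : ∀ _ : H, ℂ) h = f (x * h) := rfl

variable [Fact (1 ≤ p)]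

private lemma norm_resL_le (ht : 0 < p.toReal) (x : G) (f : lp (fun _ : G => ℂ) p) :
    ‖resL H x f‖ ≤ ‖f‖ := by
  rw [← Real.rpow_le_rpow_iff (norm_nonneg _) (norm_nonneg _) ht,
    lp.norm_rpow_eq_tsum ht, lp.norm_rpow_eq_tsum ht]
  refine Summable.tsum_le_tsum_of_inj (fun h : H => x * (h : G)) (coset_inj H x)
    (fun c _ => ?_) (fun b => le_of_eq rfl) ?_ ?_
  · positivity
  · exact ((lp.memℓp f).summable ht).comp_injective (coset_inj H x)
  · exact (lp.memℓp f).summable ht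

/-- Restriction to a coset as a continuous linear map. -/
noncomputable def resCLM (ht : 0 < p.toReal) (x : G) :
    lp (fun _ : G => ℂ) p →L[ℂ] lp (fun _ : H => ℂ) p :=
  LinearMap.mkContinuous (resL H x) 1 (fun f => by
    simpa using norm_resL_le H ht x f)

private lemma memℓp_ext (ht : 0 < p.toReal) (x : G) (φ : lp (fun _ : H => ℂ) p) :
    Memℓp (fun g : G => if hg : x⁻¹ * g ∈ H then (φ ⟨x⁻¹ * g, hg⟩ : ℂ) else 0) p := by
  have hp0 : p ≠ 0 := by
    intro h0
    simp [h0] at ht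
  have hptop : p ≠ ∞ := by
    intro h0
    simp [h0] at ht
  rw [memℓp_gen_iff ht]
  set F : G → ℂ := fun g => if hg : x⁻¹ * g ∈ H then (φ ⟨x⁻¹ * g, hg⟩ : ℂ) else 0 with hF
  have hcomp : ∀ h : H, F (x * h) = φ h := by
    intro h
    simp [hF, inv_mul_cancel_left]
  have hrange : ∀ g : G, g ∉ Set.range (fun h : H => x * (h : G)) → F g = 0 := by
    intro g hg
    have : ¬ (x⁻¹ * g ∈ H) := by
      intro hmem
      exact hg ⟨⟨x⁻¹ * g, hmem⟩, by simp⟩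
    simp [hF, this]
  have hsum : Summable (fun h : H => ‖φ h‖ ^ p.toReal) := (lp.memℓp φ).summable ht
  have : Summable ((fun g : G => ‖F g‖ ^ p.toReal) ∘ (fun h : H => x * (h : G))) := by
    refine hsum.congr fun h => ?_
    simp [Function.comp, hcomp h]
  refine (Function.Injective.summable_iff (coset_inj H x) ?_).1 this
  intro g hg
  have hmem : ¬ (x⁻¹ * g ∈ H) := fun hmem => hg ⟨⟨x⁻¹ * g, hmem⟩, by simp⟩
  simp [hF, hmem, Real.zero_rpow ht.ne']

/-- Extension by zero of a function on `H` to the coset `xH` in `ℓ^p(G)`. -/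
noncomputable def extL (ht : 0 < p.toReal) (x : G) :
    lp (fun _ : H => ℂ) p →ₗ[ℂ] lp (fun _ : G => ℂ) p where
  toFun φ := ⟨fun g : G => if hg : x⁻¹ * g ∈ H then (φ ⟨x⁻¹ * g, hg⟩ : ℂ) else 0,
    memℓp_ext H ht x φ⟩
  map_add' φ ψ := by
    refine Subtype.ext (funext fun g => ?_)
    show (if hg : x⁻¹ * g ∈ H then ((φ + ψ : lp (fun _ : H => ℂ) p) : ∀ _ : H, ℂ)
            ⟨x⁻¹ * g, hg⟩ else 0) =
        (if hg : x⁻¹ * g ∈ H then (φ : ∀ _ : H, ℂ) ⟨x⁻¹ * g, hg⟩ else 0) +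
        (if hg : x⁻¹ * g ∈ H then (ψ : ∀ _ : H, ℂ) ⟨x⁻¹ * g, hg⟩ else 0)
    by_cases hg : x⁻¹ * g ∈ H <;> simp [hg, lp.coeFn_add]
  map_smul' c φ := by
    refine Subtype.ext (funext fun g => ?_)
    show (if hg : x⁻¹ * g ∈ H then ((c • φ : lp (fun _ : H => ℂ) p) : ∀ _ : H, ℂ)
            ⟨x⁻¹ * g, hg⟩ else 0) =
        c • (if hg : x⁻¹ * g ∈ H then (φ : ∀ _ : H, ℂ) ⟨x⁻¹ * g, hg⟩ else 0)
    by_cases hg : x⁻¹ * g ∈ H <;> simp [hg, lp.coeFn_smul]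

@[simp] lemma extL_apply (ht : 0 < p.toReal) (x : G) (φ : lp (fun _ : H => ℂ) p) (g : G) :
    (extL H ht x φ : ∀ _ : G, ℂ) g =
      if hg : x⁻¹ * g ∈ H then (φ ⟨x⁻¹ * g, hg⟩ : ℂ) else 0 := rfl

private lemma norm_extL (ht : 0 < p.toReal) (x : G) (φ : lp (fun _ : H => ℂ) p) :
    ‖extL H ht x φ‖ = ‖φ‖ := by
  refine Real.rpow_left_injOn ht.ne' (norm_nonneg _) (norm_nonneg _) ?_
  simp only [lp.norm_rpow_eq_tsum ht]
  rw [← Function.Injective.tsum_eq (coset_inj H x)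
    (f := fun g : G => ‖(extL H ht x φ : ∀ _ : G, ℂ) g‖ ^ p.toReal)]
  · refine tsum_congr fun h => ?_
    simp [inv_mul_cancel_left]
  · refine Function.support_subset_iff'.2 fun g hgr => ?_
    have hmem : ¬ (x⁻¹ * g ∈ H) := fun hmem => hgr ⟨⟨x⁻¹ * g, hmem⟩, by simp⟩
    simp [hmem, Real.zero_rpow ht.ne']

@[simp] lemma resCLM_apply (ht : 0 < p.toReal) (x : G) (f : lp (fun _ : G => ℂ) p) :
    resCLM H ht x f = resL H x f := rfl

lemma resL_translate (x g : G) (f : lp (fun _ : G => ℂ) p) :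
    resL H x (lpTranslate g f) = resL H (g⁻¹ * x) f := by
  refine Subtype.ext (funext fun h => ?_)
  show (f : ∀ _ : G, ℂ) (g⁻¹ * (x * h)) = (f : ∀ _ : G, ℂ) ((g⁻¹ * x) * h)
  rw [mul_assoc]

lemma resL_apply_one (x : G) (f : lp (fun _ : G => ℂ) p) :
    (resL H x f : ∀ _ : H, ℂ) (1 : H) = f x := by
  show (f : ∀ _ : G, ℂ) (x * ((1 : H) : G)) = _
  simp

lemma lpTranslate_one {G' : Type*} [Group G'] {q : ℝ≥0∞} (f : lp (fun _ : G' => ℂ) q) :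
    lpTranslate (1 : G') f = f := by
  refine Subtype.ext (funext fun x => ?_)
  show (f : ∀ _ : G', ℂ) ((1 : G')⁻¹ * x) = (f : ∀ _ : G', ℂ) x
  simp

lemma resL_extL_of_mem (ht : 0 < p.toReal) {x y : G} (hxy : y⁻¹ * x ∈ H)
    (e : lp (fun _ : H => ℂ) p) :
    resL H x (extL H ht y e) = lpTranslate (⟨y⁻¹ * x, hxy⟩ : H)⁻¹ e := by
  refine Subtype.ext (funext fun h => ?_)
  show (if hg : y⁻¹ * (x * h) ∈ H then (e : ∀ _ : H, ℂ) ⟨y⁻¹ * (x * h), hg⟩ else 0)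
      = (e : ∀ _ : H, ℂ) (((⟨y⁻¹ * x, hxy⟩ : H)⁻¹)⁻¹ * h)
  have hmem : y⁻¹ * (x * (h : G)) ∈ H := by
    have : (y⁻¹ * x) * (h : G) ∈ H := H.mul_mem hxy h.2
    simpa [mul_assoc] using this
  rw [dif_pos hmem]
  have harg : (⟨y⁻¹ * (x * (h : G)), hmem⟩ : H) = ((⟨y⁻¹ * x, hxy⟩ : H)⁻¹)⁻¹ * h := by
    refine Subtype.ext ?_
    simp [mul_assoc]
  rw [harg]

lemma resL_extL_of_not_mem (ht : 0 < p.toReal) {x y : G} (hxy : ¬ y⁻¹ * x ∈ H)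
    (e : lp (fun _ : H => ℂ) p) :
    resL H x (extL H ht y e) = 0 := by
  refine Subtype.ext (funext fun h => ?_)
  show (if hg : y⁻¹ * (x * h) ∈ H then (e : ∀ _ : H, ℂ) ⟨y⁻¹ * (x * h), hg⟩ else 0) = 0
  have hmem : ¬ (y⁻¹ * (x * (h : G)) ∈ H) := by
    intro hmem
    apply hxy
    have := H.mul_mem hmem (H.inv_mem h.2)
    simpa [mul_assoc] using this
  rw [dif_neg hmem]

lemma extL_single (ht : 0 < p.toReal) (g : G) :
    extL H ht g (lp.single p (1 : H) (1 : ℂ)) = lp.single p g (1 : ℂ) := by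
  refine Subtype.ext (funext fun y => ?_)
  show (if hg : g⁻¹ * y ∈ H then
      (lp.single p (1 : H) (1 : ℂ) : ∀ _ : H, ℂ) ⟨g⁻¹ * y, hg⟩ else 0)
    = (lp.single p g (1 : ℂ) : ∀ _ : G, ℂ) y
  by_cases hg : g⁻¹ * y ∈ H
  · rw [dif_pos hg]
    by_cases hy : y = g
    · have h1 : (⟨g⁻¹ * y, hg⟩ : H) = 1 := by
        refine Subtype.ext ?_
        simp [hy]
      rw [h1, hy, lp.single_apply_self, lp.single_apply_self]
    · have h1 : (⟨g⁻¹ * y, hg⟩ : H) ≠ 1 := by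
        intro hc
        apply hy
        have h2 : g⁻¹ * y = 1 := congrArg Subtype.val hc
        rw [inv_mul_eq_one] at h2
        exact h2.symm
      rw [lp.single_apply_ne (E := fun _ : H => ℂ) p 1 1 h1, lp.single_apply_ne (E := fun _ : G => ℂ) p g 1 hy]
  · rw [dif_neg hg]
    have hy : y ≠ g := by
      intro hc
      exact hg (by simp [hc, H.one_mem])
    rw [lp.single_apply_ne (E := fun _ : G => ℂ) p g 1 hy]

lemma single_eq_smul_single_one (g : G) (c : ℂ) :
    (lp.single p g c : lp (fun _ : G => ℂ) p) =
      c • (lp.single p g (1 : ℂ) : lp (fun _ : G => ℂ) p) := by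
  rw [← lp.single_smul (E := fun _ : G => ℂ) p g c (1 : ℂ), smul_eq_mul, mul_one]

end Aux

set_option maxHeartbeats 2000000 in
/-- If a subgroup `H` of `G` admits a thin invariant exhaustion of `ℓ^p(H)`
(`1 ≤ p < ∞`), then `G` admits a thin invariant exhaustion of `ℓ^p(G)`. -/
theorem stmt5 (G : Type*) [Group G] (H : Subgroup G) (p : ℝ≥0∞)
    [hp1 : Fact (1 ≤ p)] (hp2 : p ≠ ∞)
    (h : ∃ E : ℕ → Submodule ℂ (lp (fun _ : H => ℂ) p),
      IsThinInvariantExhaustion p E) :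
    ∃ E : ℕ → Submodule ℂ (lp (fun _ : G => ℂ) p),
      IsThinInvariantExhaustion p E := by
  classical
  obtain ⟨E, hEc, hEmono, hEinv, hEdense, F, hFc, hFinv, hFne, hEF⟩ := h
  have hp0 : (0 : ℝ≥0∞) < p := lt_of_lt_of_le zero_lt_one hp1.out
  have ht : 0 < p.toReal := ENNReal.toReal_pos hp0.ne' hp2
  set E' : ℕ → Submodule ℂ (lp (fun _ : G => ℂ) p) := fun i =>
    ⨅ x : G, (E i).comap
      ((resCLM H ht x : lp (fun _ : G => ℂ) p →L[ℂ] lp (fun _ : H => ℂ) p) :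
        lp (fun _ : G => ℂ) p →ₗ[ℂ] lp (fun _ : H => ℂ) p) with hE'
  set F' : Submodule ℂ (lp (fun _ : G => ℂ) p) :=
    ⨅ x : G, F.comap
      ((resCLM H ht x : lp (fun _ : G => ℂ) p →L[ℂ] lp (fun _ : H => ℂ) p) :
        lp (fun _ : G => ℂ) p →ₗ[ℂ] lp (fun _ : H => ℂ) p) with hF'
  have memE' : ∀ i (f : lp (fun _ : G => ℂ) p),
      f ∈ E' i ↔ ∀ x : G, resL H x f ∈ E i := by
    intro i f
    simp [hE', Submodule.mem_iInf, Submodule.mem_comap]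
  have memF' : ∀ f : lp (fun _ : G => ℂ) p,
      f ∈ F' ↔ ∀ x : G, resL H x f ∈ F := by
    intro f
    simp [hF', Submodule.mem_iInf, Submodule.mem_comap]
  refine ⟨E', ?_, ?_, ?_, ?_, F', ?_, ?_, ?_, ?_⟩
  · -- closedness
    intro i
    have hset : (E' i : Set (lp (fun _ : G => ℂ) p)) =
        ⋂ x : G, (resCLM H ht x) ⁻¹' (E i : Set (lp (fun _ : H => ℂ) p)) := by
      ext f
      simp [memE' i f, Set.mem_iInter]
    rw [hset]
    exact isClosed_iInter fun x => (hEc i).preimage (resCLM H ht x).continuous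
  · -- monotone
    intro i j hij
    exact iInf_mono fun x => Submodule.comap_mono (hEmono hij)
  · -- invariance
    intro i g f hf
    rw [memE'] at hf ⊢
    intro x
    rw [resL_translate]
    exact hf _
  · -- density
    rw [Metric.dense_iff]
    intro f r hr
    -- finitely supported approximation
    obtain ⟨s, hs⟩ := (Metric.tendsto_nhds.mp (lp.hasSum_single hp2 f) (r / 2)
      (by positivity)).exists
    -- approximate the delta function at 1 ∈ H
    have hδ : ∀ η : ℝ, 0 < η → ∃ i : ℕ, ∃ e : lp (fun _ : H => ℂ) p,
        e ∈ E i ∧ ‖(lp.single p (1 : H) (1 : ℂ) : lp (fun _ : H => ℂ) p) - e‖ < η := by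
      intro η hη
      have hmemcl := hEdense (lp.single p (1 : H) (1 : ℂ))
      rw [Metric.mem_closure_iff] at hmemcl
      obtain ⟨b, hb, hd⟩ := hmemcl η hη
      obtain ⟨i, hbi⟩ := Set.mem_iUnion.1 hb
      exact ⟨i, b, hbi, by rwa [dist_eq_norm] at hd⟩
    set η : G → ℝ := fun g =>
      r / (2 * ((s.card : ℝ) + 1) * (‖(f : ∀ _ : G, ℂ) g‖ + 1)) with hη
    have hηpos : ∀ g : G, 0 < η g := by
      intro g
      have := norm_nonneg ((f : ∀ _ : G, ℂ) g)
      positivity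
    choose idx el helmem helnorm using fun g : G => hδ (η g) (hηpos g)
    set N := s.sup idx with hN
    set a : lp (fun _ : G => ℂ) p :=
      ∑ g ∈ s, (f : ∀ _ : G, ℂ) g • extL H ht g (el g) with ha
    have haE' : a ∈ E' N := by
      refine Submodule.sum_mem _ fun g hg => Submodule.smul_mem _ _ ?_
      rw [memE']
      intro x
      by_cases hx : g⁻¹ * x ∈ H
      · rw [resL_extL_of_mem H ht hx]
        exact hEmono (Finset.le_sup hg) (hEinv _ _ _ (helmem g))
      · rw [resL_extL_of_not_mem H ht hx]
        exact (E N).zero_mem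
    -- distance estimate
    have hterm : ∀ g ∈ s,
        ‖(lp.single p g ((f : ∀ _ : G, ℂ) g) : lp (fun _ : G => ℂ) p) -
          (f : ∀ _ : G, ℂ) g • extL H ht g (el g)‖ ≤ r / (2 * ((s.card : ℝ) + 1)) := by
      intro g _
      set c : ℂ := (f : ∀ _ : G, ℂ) g with hc
      have h1 : (lp.single p g c : lp (fun _ : G => ℂ) p) - c • extL H ht g (el g)
          = c • extL H ht g ((lp.single p (1 : H) (1 : ℂ) : lp (fun _ : H => ℂ) p)
              - el g) := by
        rw [single_eq_smul_single_one, ← extL_single H ht g, map_sub, smul_sub]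
      rw [h1, norm_smul, norm_extL]
      have hle : ‖(lp.single p (1 : H) (1 : ℂ) : lp (fun _ : H => ℂ) p) - el g‖ ≤ η g :=
        le_of_lt (helnorm g)
      have h2 : ‖c‖ * ‖(lp.single p (1 : H) (1 : ℂ) : lp (fun _ : H => ℂ) p) - el g‖
          ≤ ‖c‖ * η g := mul_le_mul_of_nonneg_left hle (norm_nonneg c)
      refine h2.trans ?_
      have hβ : η g = r / (2 * ((s.card : ℝ) + 1) * (‖c‖ + 1)) := rfl
      rw [hβ, ← mul_div_assoc, div_le_div_iff₀ (by positivity) (by positivity)]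
      have hnc : (0 : ℝ) ≤ ‖c‖ := norm_nonneg c
      have hcard : (0 : ℝ) ≤ (s.card : ℝ) := Nat.cast_nonneg _
      nlinarith [mul_nonneg hr.le hcard, mul_nonneg hr.le hnc, hr.le]
    have hsumle : ‖(∑ g ∈ s, (lp.single p g ((f : ∀ _ : G, ℂ) g) :
          lp (fun _ : G => ℂ) p)) - a‖ ≤ r / 2 := by
      rw [ha, ← Finset.sum_sub_distrib]
      refine (norm_sum_le _ _).trans ?_
      refine le_trans (Finset.sum_le_card_nsmul s _ (r / (2 * ((s.card : ℝ) + 1)))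
        hterm) ?_
      rw [nsmul_eq_mul, ← mul_div_assoc, div_le_div_iff₀ (by positivity) (by positivity)]
      have hcard : (0 : ℝ) ≤ (s.card : ℝ) := Nat.cast_nonneg _
      nlinarith [mul_nonneg hr.le hcard, hr.le]
    refine ⟨a, ?_, Set.mem_iUnion.2 ⟨N, haE'⟩⟩
    rw [Metric.mem_ball]
    have htri : dist a f ≤ dist a (∑ g ∈ s, (lp.single p g ((f : ∀ _ : G, ℂ) g) :
        lp (fun _ : G => ℂ) p)) + dist (∑ g ∈ s, (lp.single p g ((f : ∀ _ : G, ℂ) g) :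
        lp (fun _ : G => ℂ) p)) f := dist_triangle _ _ _
    have h1 : dist a (∑ g ∈ s, (lp.single p g ((f : ∀ _ : G, ℂ) g) :
        lp (fun _ : G => ℂ) p)) ≤ r / 2 := by
      rw [dist_eq_norm, ← neg_sub, norm_neg]
      exact hsumle
    calc dist a f ≤ _ + _ := htri
    _ < r / 2 + r / 2 := by
        exact add_lt_add_of_le_of_lt h1 hs
    _ = r := by ring
  · -- F' closed
    have hset : (F' : Set (lp (fun _ : G => ℂ) p)) =
        ⋂ x : G, (resCLM H ht x) ⁻¹' (F : Set (lp (fun _ : H => ℂ) p)) := by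
      ext f
      simp [memF' f, Set.mem_iInter]
    rw [hset]
    exact isClosed_iInter fun x => hFc.preimage (resCLM H ht x).continuous
  · -- F' invariant
    intro g f hf
    rw [memF'] at hf ⊢
    intro x
    rw [resL_translate]
    exact hf _
  · -- F' ≠ ⊥
    obtain ⟨ψ, hψF, hψne⟩ := (Submodule.ne_bot_iff F).1 hFne
    have h1 : (1 : G)⁻¹ * 1 ∈ H := by simp [H.one_mem]
    refine (Submodule.ne_bot_iff F').2 ⟨extL H ht 1 ψ, ?_, ?_⟩
    · rw [memF']
      intro x
      by_cases hx : (1 : G)⁻¹ * x ∈ H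
      · rw [resL_extL_of_mem H ht hx]
        exact hFinv _ _ hψF
      · rw [resL_extL_of_not_mem H ht hx]
        exact F.zero_mem
    · intro hc
      apply hψne
      have heq := resL_extL_of_mem H ht h1 ψ
      rw [hc, map_zero] at heq
      have h2 : (⟨(1 : G)⁻¹ * 1, h1⟩ : H) = 1 := by
        refine Subtype.ext ?_
        simp
      rw [h2, inv_one, lpTranslate_one] at heq
      exact heq.symm
  · -- trivial intersection
    intro i
    rw [Submodule.eq_bot_iff]
    rintro f ⟨hfE, hfF⟩
    have hzero : ∀ x : G, resL H x f = 0 := by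
      intro x
      have hmem : resL H x f ∈ E i ⊓ F :=
        ⟨(memE' i f).1 hfE x, (memF' f).1 hfF x⟩
      rw [hEF i] at hmem
      simpa using hmem
    refine Subtype.ext (funext fun x => ?_)
    show (f : ∀ _ : G, ℂ) x = 0
    have := congrArg (fun q : lp (fun _ : H => ℂ) p => (q : ∀ _ : H, ℂ) (1 : H)) (hzero x)
    simpa [resL_apply_one] using this
end

section
/- Every infinite elementary amenable torsion group is locally finite. -/
universe u

/-- The class of elementary amenable groups: the smallest class of groups
containing all finite groups and all abelian groups and closed under taking
subgroups, quotients, extensions and directed unions. -/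
inductive ElementaryAmenable : (G : Type u) → [inst : Group G] → Prop where
  | of_finite (G : Type u) [Group G] (h : Finite G) : ElementaryAmenable G
  | of_abelian (G : Type u) [Group G] (h : ∀ a b : G, a * b = b * a) :
      ElementaryAmenable G
  | subgroup (G : Type u) [Group G] (H : Subgroup G)
      (h : ElementaryAmenable G) : ElementaryAmenable H
  | quotient (G : Type u) [Group G] (N : Subgroup G) [N.Normal]
      (h : ElementaryAmenable G) : ElementaryAmenable (G ⧸ N)
  | extension (G : Type u) [Group G] (N : Subgroup G) [N.Normal]
      (h1 : ElementaryAmenable N) (h2 : ElementaryAmenable (G ⧸ N)) :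
      ElementaryAmenable G
  | directed_union (G : Type u) [Group G] (ι : Type u) (H : ι → Subgroup G)
      (hdir : Directed (· ≤ ·) H) (h : ∀ i, ElementaryAmenable (H i))
      (htop : (⨆ i, H i) = ⊤) : ElementaryAmenable G

/-- `H` is a section of `G`: some group embeds into `G` and surjects onto `H`. -/
def IsSection (G : Type u) [Group G] (H : Type u) [Group H] : Prop :=
  ∃ (K : Type u) (_ : Group K) (i : K →* G) (π : K →* H),
    Function.Injective i ∧ Function.Surjective π

lemma isSection_of_injective {G₁ G₂ H : Type u} [Group G₁] [Group G₂] [Group H]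
    (f : G₂ →* G₁) (hf : Function.Injective f) (h : IsSection G₂ H) : IsSection G₁ H := by
  obtain ⟨K, _, i, π, hi, hπ⟩ := h
  exact ⟨K, _, f.comp i, π, hf.comp hi, hπ⟩

lemma isSection_of_surjective {G₁ G₂ H : Type u} [Group G₁] [Group G₂] [Group H]
    (f : G₁ →* G₂) (hf : Function.Surjective f) (h : IsSection G₂ H) : IsSection G₁ H := by
  obtain ⟨K, _, i, π, hi, hπ⟩ := h
  -- pull back `K` along `f`
  refine ⟨(i.range.comap f : Subgroup G₁), inferInstance, (i.range.comap f).subtype,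
    π.comp ((MonoidHom.ofInjective hi).symm.toMonoidHom.comp
      ((f.comp (i.range.comap f).subtype).codRestrict i.range (fun x => x.2))),
    (i.range.comap f).subtype_injective, ?_⟩
  intro h
  obtain ⟨k, rfl⟩ := hπ h
  obtain ⟨g, hg⟩ := hf (i k)
  have hgmem : g ∈ i.range.comap f := by simp [Subgroup.mem_comap, hg]
  refine ⟨⟨g, hgmem⟩, ?_⟩
  simp only [MonoidHom.comp_apply]
  congr 1
  have : ((f.comp (i.range.comap f).subtype).codRestrict i.range (fun x => x.2)) ⟨g, hgmem⟩
      = MonoidHom.ofInjective hi k := by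
    ext
    exact hg
  rw [this]
  exact (MonoidHom.ofInjective hi).symm_apply_apply k

lemma key : ∀ (G : Type u) [Group G], ElementaryAmenable G →
    ∀ (H : Type u) [Group H], IsSection G H → (∀ h : H, IsOfFinOrder h) →
    Group.FG H → Finite H := by
  intro G _ hEA
  induction hEA with
  | of_finite G hfin =>
    intro H _ ⟨K, _, i, π, hi, hπ⟩ _ _
    have : Finite K := Finite.of_injective i hi
    exact Finite.of_surjective π hπ
  | of_abelian G hab =>
    intro H _ ⟨K, _, i, π, hi, hπ⟩ htor hfg
    have hcomm : ∀ a b : H, a * b = b * a := by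
      intro a b
      obtain ⟨x, rfl⟩ := hπ a
      obtain ⟨y, rfl⟩ := hπ b
      rw [← map_mul, ← map_mul]
      congr 1
      apply hi
      rw [map_mul, map_mul, hab]
    letI : CommGroup H := { (inferInstance : Group H) with mul_comm := hcomm }
    exact CommGroup.finite_of_fg_torsion H htor
  | subgroup G K hEA ih =>
    intro H _ hsec htor hfg
    exact ih H (isSection_of_injective K.subtype K.subtype_injective hsec) htor hfg
  | quotient G N hEA ih =>
    intro H _ hsec htor hfg
    exact ih H (isSection_of_surjective (QuotientGroup.mk' N)
      (QuotientGroup.mk'_surjective N) hsec) htor hfg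
  | extension G N hN hQ ihN ihQ =>
    intro H _ ⟨K, _, i, π, hi, hπ⟩ htor hfg
    -- N' := preimage of N in K, M := image of N' in H
    set N' : Subgroup K := N.comap i with hN'
    haveI : N'.Normal := (‹N.Normal›).comap i
    set M : Subgroup H := N'.map π with hM
    haveI : M.Normal := Subgroup.Normal.map ‹N'.Normal› π hπ
    -- H ⧸ M is a section of G ⧸ N
    have hQfin : Finite (H ⧸ M) := by
      haveI : Group.FG H := hfg
      refine ihQ (H ⧸ M) ?_ ?_ ?_
      · refine ⟨K ⧸ N', inferInstance,
          QuotientGroup.map N' N i le_rfl,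
          QuotientGroup.map N' M π (fun x hx => Subgroup.mem_comap.mpr (Subgroup.mem_map_of_mem π hx)),
          ?_, ?_⟩
        · rw [← MonoidHom.ker_eq_bot_iff]
          rw [eq_bot_iff]
          intro x hx
          obtain ⟨k, rfl⟩ := QuotientGroup.mk_surjective x
          have : (i k : G) ∈ N := by
            have := hx
            rw [MonoidHom.mem_ker, QuotientGroup.map_mk] at this
            exact (QuotientGroup.eq_one_iff _).mp this
          simpa [Subgroup.mem_bot, QuotientGroup.eq_one_iff, hN'] using
            (QuotientGroup.eq_one_iff (k : K)).mpr (Subgroup.mem_comap.mpr this)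
        · intro x
          obtain ⟨h, rfl⟩ := QuotientGroup.mk_surjective x
          obtain ⟨k, rfl⟩ := hπ h
          exact ⟨QuotientGroup.mk k, by simp [QuotientGroup.map_mk]⟩
      · intro x
        obtain ⟨h, rfl⟩ := QuotientGroup.mk_surjective x
        exact (QuotientGroup.mk' M).isOfFinOrder (htor h)
      · exact Group.fg_of_surjective (QuotientGroup.mk'_surjective M)
    -- M is finite by Schreier + section of N
    haveI : Group.FG H := hfg
    haveI : M.FiniteIndex := M.finiteIndex_of_finite_quotient
    haveI : Group.FG M := Subgroup.fg_of_index_ne_zero M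
    have hMfin : Finite M := by
      refine ihN M ?_ (fun m => ?_) inferInstance
      · refine ⟨N', inferInstance,
          (i.comp N'.subtype).codRestrict N (fun x => x.2),
          (π.comp N'.subtype).codRestrict M (fun x => Subgroup.mem_map_of_mem π x.2),
          ?_, ?_⟩
        · intro a b hab
          have : i (a : K) = i (b : K) := congrArg Subtype.val hab
          exact Subtype.ext (hi this)
        · rintro ⟨m, hm⟩
          obtain ⟨k, hk, rfl⟩ := hm
          exact ⟨⟨k, hk⟩, rfl⟩
      · have := htor (m : H)
        rw [isOfFinOrder_iff_pow_eq_one] at this ⊢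
        obtain ⟨n, hn, hmn⟩ := this
        exact ⟨n, hn, Subtype.ext (by simpa using hmn)⟩
    exact Finite.of_subgroup_quotient M
  | directed_union G ι Hf hdir hEA htop ih =>
    intro H _ ⟨K, _, i, π, hi, hπ⟩ htor hfg
    obtain ⟨T, hT⟩ := hfg.1
    -- lift generators of H to K
    choose lift hlift using hπ
    classical
    set S : Finset K := T.image lift with hS
    set L : Subgroup K := Subgroup.closure (S : Set K) with hL
    have hmapL : Subgroup.map π L = ⊤ := by
      rw [hL, MonoidHom.map_closure, eq_top_iff, ← hT, Subgroup.closure_le]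
      intro t ht
      apply Subgroup.subset_closure
      exact ⟨lift t, Finset.mem_image_of_mem lift ht, hlift t⟩
    cases isEmpty_or_nonempty ι with
    | inl hempty =>
      have : ∀ g : G, g ∈ (⊥ : Subgroup G) := by
        intro g
        have : g ∈ (⊤ : Subgroup G) := trivial
        rw [← htop] at this
        simpa [iSup_of_empty] using this
      haveI : Subsingleton G := by
        constructor
        intro a b
        have ha := this a
        have hb := this b
        simp [Subgroup.mem_bot] at ha hb
        rw [ha, hb]
      haveI : Subsingleton K := ⟨fun a b => hi (Subsingleton.elim _ _)⟩
      haveI : Subsingleton H := by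
        constructor
        intro a b
        rw [← hlift a, ← hlift b, Subsingleton.elim (lift a) (lift b)]
      exact Finite.of_subsingleton
    | inr hne =>
      -- find a single H j containing i '' S
      have hmem : ∀ s : {x // x ∈ S}, ∃ j, i s.1 ∈ Hf j := by
        intro s
        have : i s.1 ∈ (⨆ j, Hf j) := htop ▸ trivial
        exact (Subgroup.mem_iSup_of_directed hdir).mp this
      choose idx hidx using hmem
      obtain ⟨j, hj⟩ := hdir.finset_le (S.attach.image idx)
      have hSin : ∀ s ∈ S, i s ∈ Hf j := by
        intro s hs
        exact hj _ (Finset.mem_image_of_mem _ (Finset.mem_attach _ ⟨s, hs⟩)) (hidx ⟨s, hs⟩)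
      have hIL : ∀ x : L, i (x : K) ∈ Hf j := by
        intro x
        have : (x : K) ∈ Subgroup.closure (S : Set K) := x.2
        have : i (x : K) ∈ Subgroup.map i (Subgroup.closure (S : Set K)) :=
          Subgroup.mem_map_of_mem i this
        rw [MonoidHom.map_closure] at this
        refine Subgroup.closure_le (Hf j) |>.mpr ?_ this
        rintro g ⟨s, hs, rfl⟩
        exact hSin s hs
      refine ih j H ?_ htor hfg
      refine ⟨L, inferInstance,
        (i.comp L.subtype).codRestrict (Hf j) hIL,
        π.comp L.subtype, ?_, ?_⟩
      · intro a b hab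
        have : i (a : K) = i (b : K) := congrArg Subtype.val hab
        exact Subtype.ext (hi this)
      · intro h
        have : h ∈ Subgroup.map π L := hmapL ▸ trivial
        obtain ⟨k, hk, rfl⟩ := this
        exact ⟨⟨k, hk⟩, rfl⟩

/-- Every infinite elementary amenable torsion group is locally finite. -/
theorem stmt13 (G : Type u) [Group G] [Infinite G]
    (hEA : ElementaryAmenable G) (htor : ∀ g : G, IsOfFinOrder g) :
    ∀ S : Finset G, Finite (Subgroup.closure (S : Set G)) := by
  intro S
  refine key G hEA (Subgroup.closure (S : Set G)) ?_ ?_ inferInstance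
  · exact ⟨Subgroup.closure (S : Set G), inferInstance,
      (Subgroup.closure (S : Set G)).subtype, MonoidHom.id _,
      (Subgroup.closure (S : Set G)).subtype_injective, fun x => ⟨x, rfl⟩⟩
  · intro g
    have := htor (g : G)
    rw [isOfFinOrder_iff_pow_eq_one] at this ⊢
    obtain ⟨n, hn, hgn⟩ := this
    exact ⟨n, hn, Subtype.ext (by simpa using hgn)⟩
end

section
/- Let $p \geq 1$ and let $(\mu_j)_{j \geq 1}$ be probability measures on finite abelian groups $A_j$ of cardinalities $c_j \geq 2$, with $\mu_j$ uniform on $A_j \setminus \{0\}$. If $\sum_{j=1}^\infty (c_j - 1)^{1-p} < \infty$, then the product measure $\mu = \prod_j \mu_j$ on $\prod_j A_j$ has Fourier transform in $\ell^p$ of the dual group $\bigoplus_j \widehat{A_j}$. -/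
open MeasureTheory
open scoped Classical

lemma auxToReal (c : ℕ) (h2 : 2 ≤ c) : (1 / ((c:ENNReal) - 1)).toReal = ((c:ℝ)-1)⁻¹ := by
  have h1 : (1:ℕ) ≤ c := by omega
  rw [one_div, ENNReal.toReal_inv, ENNReal.toReal_sub_of_le (by exact_mod_cast h1) (by simp)]
  simp

lemma auxFilter {M : Type*} [CommMonoid M] (S : Finset ℕ) (n : ℕ) (hS : ∀ j ∈ S, j < n)
    (f : ℕ → M) : ∏ j ∈ Finset.range n, (if j ∈ S then f j else 1) = ∏ j ∈ S, f j := by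
  rw [← Finset.prod_filter]
  apply Finset.prod_congr _ (fun _ _ => rfl)
  ext j
  simp only [Finset.mem_filter, Finset.mem_range]
  exact ⟨fun h => h.2, fun h => ⟨hS j h, h⟩⟩

lemma auxCharSum {B : Type*} [AddCommGroup B] [Fintype B] (c : ℝ)
    (χ : AddChar B ℂ) (hχ : χ ≠ 0) :
    ∑ a : B, (↑(if a = (0:B) then (0:ℝ) else (c-1)⁻¹) : ℂ) * χ a = -(((c-1)⁻¹ : ℝ) : ℂ) := by
  have hs : ∑ a : B, χ a = 0 := AddChar.sum_eq_zero_iff_ne_zero.mpr hχ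
  set K : ℂ := (((c-1)⁻¹ : ℝ) : ℂ) with hK
  have h : ∀ a : B, (↑(if a = (0:B) then (0:ℝ) else (c-1)⁻¹) : ℂ) * χ a
      = K * χ a - (if a = (0:B) then K * χ a else 0) := by
    intro a; split_ifs <;> simp [hK]
  rw [Finset.sum_congr rfl (fun a _ => h a), Finset.sum_sub_distrib, ← Finset.mul_sum, hs,
    Finset.sum_ite_eq' Finset.univ (0:B) (fun a => K * χ a)]
  simp

set_option maxHeartbeats 1000000 in
lemma auxIntegral (A : ℕ → Type*) [∀ j, AddCommGroup (A j)] [∀ j, Fintype (A j)]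
    [∀ j, MeasurableSpace (A j)] [∀ j, DiscreteMeasurableSpace (A j)]
    (μs : ∀ j, Measure (A j))
    (μ : Measure (∀ j, A j)) [IsProbabilityMeasure μ]
    (hμ : ∀ (n : ℕ) (s : ∀ j, Set (A j)),
      μ {x | ∀ j < n, x j ∈ s j} = ∏ j ∈ Finset.range n, μs j (s j))
    (n : ℕ) (φ : ∀ j, A j → ℂ) :
    ∫ x : ∀ j, A j, ∏ j ∈ Finset.range n, φ j (x j) ∂μ
      = ∏ j ∈ Finset.range n, ∑ a : A j, ((μs j {a}).toReal : ℂ) * φ j a := by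
  have hT : Measurable (fun (x : ∀ j, A j) (j : Fin n) => x (j:ℕ)) :=
    measurable_pi_lambda _ fun j => measurable_pi_apply _
  haveI : IsProbabilityMeasure (μ.map (fun (x : ∀ j, A j) (j : Fin n) => x (j:ℕ))) :=
    Measure.isProbabilityMeasure_map hT.aemeasurable
  have hmap : ∀ y : ∀ j : Fin n, A (j:ℕ),
      (μ.map (fun (x : ∀ j, A j) (j : Fin n) => x (j:ℕ))) {y}
        = ∏ j : Fin n, μs (j:ℕ) {y j} := by
    intro y
    rw [Measure.map_apply hT (measurableSet_singleton y)]
    have hpre : (fun (x : ∀ j, A j) (j : Fin n) => x (j:ℕ)) ⁻¹' {y} = {x | ∀ j < n, x j ∈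
        (fun j => if h : j < n then ({y ⟨j, h⟩} : Set (A j)) else Set.univ) j} := by
      ext x
      simp only [Set.mem_preimage, Set.mem_singleton_iff, funext_iff, Set.mem_setOf_eq]
      constructor
      · intro h j hj; rw [dif_pos hj]; exact h ⟨j, hj⟩
      · intro h j
        have hh := h j j.2
        rw [dif_pos j.2] at hh
        exact hh
    rw [hpre, hμ n _, ← Fin.prod_univ_eq_prod_range
      (fun j => μs j ((fun j => if h : j < n then ({y ⟨j, h⟩} : Set (A j)) else Set.univ) j)) n]
    apply Finset.prod_congr rfl
    intro j _
    simp only [dif_pos j.2]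
  calc ∫ x : ∀ j, A j, ∏ j ∈ Finset.range n, φ j (x j) ∂μ
      = ∫ x : ∀ j, A j, ∏ j : Fin n, φ (j:ℕ) (x (j:ℕ)) ∂μ :=
        integral_congr_ae (Filter.Eventually.of_forall fun x =>
          (Fin.prod_univ_eq_prod_range (fun j => φ j (x j)) n).symm)
    _ = ∫ y : ∀ j : Fin n, A (j:ℕ), ∏ j : Fin n, φ (j:ℕ) (y j)
          ∂(μ.map (fun (x : ∀ j, A j) (j : Fin n) => x (j:ℕ))) :=
        (integral_map hT.aemeasurable
          (Measurable.of_discrete (f := fun y : ∀ j : Fin n, A (j:ℕ) =>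
            ∏ j : Fin n, φ (j:ℕ) (y j))).aestronglyMeasurable).symm
    _ = ∑ y : ∀ j : Fin n, A (j:ℕ),
          ((μ.map (fun (x : ∀ j, A j) (j : Fin n) => x (j:ℕ))) {y}).toReal
            • ∏ j : Fin n, φ (j:ℕ) (y j) := integral_fintype (.of_finite)
    _ = ∑ y : ∀ j : Fin n, A (j:ℕ), ∏ j : Fin n, (((μs (j:ℕ) {y j}).toReal : ℂ) * φ (j:ℕ) (y j)) := by
        apply Finset.sum_congr rfl
        intro y _
        rw [hmap y, ENNReal.toReal_prod, Complex.real_smul, Complex.ofReal_prod,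
          ← Finset.prod_mul_distrib]
    _ = ∏ j : Fin n, ∑ a : A (j:ℕ), (((μs (j:ℕ) {a}).toReal : ℂ) * φ (j:ℕ) a) :=
        (Fintype.prod_sum (fun (j : Fin n) (a : A (j:ℕ)) => ((μs (j:ℕ) {a}).toReal : ℂ) * φ (j:ℕ) a)).symm
    _ = ∏ j ∈ Finset.range n, ∑ a : A j, ((μs j {a}).toReal : ℂ) * φ j a :=
        Fin.prod_univ_eq_prod_range (fun j => ∑ a : A j, ((μs j {a}).toReal : ℂ) * φ j a) n

set_option maxHeartbeats 1000000 in
/-- Let `μ_j` be the uniform probability measure on `A_j \ {0}` for finite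
abelian groups `A_j` with `|A_j| = c_j ≥ 2`, and let `μ` be a product measure of
the `μ_j` on `Π_j A_j` (characterized on cylinder sets).  If
`∑_j (c_j - 1)^{1-p} < ∞` (`p ≥ 1`), then the Fourier transform of `μ` lies in
`ℓ^p` of the dual group `⨁_j Â_j`, whose elements are the finitely supported
families of characters `χ = (χ_j)_j`, with `μ̂(χ) = ∫ ∏_j χ_j(x_j) dμ(x)`. -/
theorem stmt15 (A : ℕ → Type*) [∀ j, AddCommGroup (A j)] [∀ j, Fintype (A j)]
    [∀ j, MeasurableSpace (A j)] [∀ j, DiscreteMeasurableSpace (A j)]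
    (c : ℕ → ℕ) (hc : ∀ j, c j = Fintype.card (A j)) (h2 : ∀ j, 2 ≤ c j)
    (p : ℝ) (hp : 1 ≤ p)
    (μs : ∀ j, Measure (A j)) (hμs : ∀ j, IsProbabilityMeasure (μs j))
    (hunif : ∀ j (a : A j), μs j {a} = if a = 0 then 0 else 1 / ((c j : ENNReal) - 1))
    (μ : Measure (∀ j, A j)) (hμprob : IsProbabilityMeasure μ)
    (hμ : ∀ (n : ℕ) (s : ∀ j, Set (A j)),
      μ {x | ∀ j < n, x j ∈ s j} = ∏ j ∈ Finset.range n, μs j (s j))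
    (hsum : Summable fun j => ((c j : ℝ) - 1) ^ (1 - p)) :
    Summable fun χ : Π₀ j, Additive (AddChar (A j) ℂ) =>
      ‖∫ x : ∀ j, A j, (∏ j ∈ χ.support, (Additive.toMul (χ j)) (x j)) ∂μ‖ ^ p := by
  have hcpos : ∀ j, (0:ℝ) < (c j : ℝ) - 1 := by
    intro j
    have : (2:ℝ) ≤ (c j : ℝ) := by exact_mod_cast h2 j
    linarith
  -- Step A: compute the summand
  have key : ∀ χ : Π₀ j, Additive (AddChar (A j) ℂ),
      ‖∫ x : ∀ j, A j, (∏ j ∈ χ.support, (Additive.toMul (χ j)) (x j)) ∂μ‖ ^ p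
      = ∏ j ∈ χ.support, (((c j:ℝ)-1)⁻¹) ^ p := by
    intro χ
    set S := χ.support with hSdef
    obtain ⟨n, hS⟩ : ∃ n, ∀ j ∈ S, j < n :=
      ⟨S.sup id + 1, fun j hj => Nat.lt_succ_of_le (Finset.le_sup (f := id) hj)⟩
    have hval : (∫ x : ∀ j, A j, (∏ j ∈ S, (Additive.toMul (χ j)) (x j)) ∂μ)
        = ∏ j ∈ S, (-((((c j:ℝ)-1)⁻¹ : ℝ) : ℂ)) := by
      calc (∫ x : ∀ j, A j, (∏ j ∈ S, (Additive.toMul (χ j)) (x j)) ∂μ)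
          = ∫ x : ∀ j, A j, ∏ j ∈ Finset.range n,
              (fun j a => if j ∈ S then Additive.toMul (χ j) a else 1) j (x j) ∂μ :=
            integral_congr_ae (Filter.Eventually.of_forall fun x =>
              (auxFilter S n hS (fun j => Additive.toMul (χ j) (x j))).symm)
        _ = ∏ j ∈ Finset.range n, ∑ a : A j, ((μs j {a}).toReal : ℂ)
              * (fun j a => if j ∈ S then Additive.toMul (χ j) a else 1) j a :=
            auxIntegral A μs μ hμ n (fun j a => if j ∈ S then Additive.toMul (χ j) a else 1)
        _ = ∏ j ∈ Finset.range n, (if j ∈ S then -((((c j:ℝ)-1)⁻¹ : ℝ) : ℂ) else 1) := by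
            apply Finset.prod_congr rfl
            intro j _
            have htr : ∀ a : A j, (μs j {a}).toReal
                = if a = 0 then (0:ℝ) else ((c j :ℝ)-1)⁻¹ := by
              intro a
              rw [hunif]
              split_ifs
              · simp
              · exact auxToReal _ (h2 _)
            by_cases hj : j ∈ S
            · simp only [if_pos hj]
              have h0 : χ j ≠ 0 := DFinsupp.mem_support_iff.mp hj
              have hne : Additive.toMul (χ j) ≠ 0 := by
                intro h
                exact h0 (Additive.toMul.injective (h.trans rfl))
              simp only [htr]
              exact auxCharSum (c j) _ hne
            · simp only [if_neg hj, mul_one]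
              have h1 : ∑ a : A j, (μs j {a}).toReal = 1 := by
                have h := integral_fintype (μ := μs j) (f := fun _ : A j => (1:ℝ)) (.of_finite)
                haveI := hμs j
                simp only [Measure.real, smul_eq_mul, mul_one, integral_const, measure_univ,
                  ENNReal.toReal_one, one_smul] at h
                exact h.symm
              rw [← Complex.ofReal_sum, h1, Complex.ofReal_one]
        _ = ∏ j ∈ S, (-((((c j:ℝ)-1)⁻¹ : ℝ) : ℂ)) :=
            auxFilter S n hS (fun j => -((((c j:ℝ)-1)⁻¹ : ℝ) : ℂ))
    rw [hval, norm_prod]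
    rw [Finset.prod_congr rfl (fun j (_ : j ∈ S) => by
      rw [norm_neg, Complex.norm_real, Real.norm_eq_abs,
        abs_of_nonneg (inv_nonneg.mpr (hcpos j).le)])]
    exact (Real.finset_prod_rpow S _ (fun j _ => inv_nonneg.mpr (hcpos j).le) p).symm
  -- Step B: summability of the explicit values
  have hε : ∀ j, (0:ℝ) ≤ ((c j : ℝ) - 1) ^ (1 - p) :=
    fun j => Real.rpow_nonneg (hcpos j).le _
  have key2 : Summable (fun χ : Π₀ j, Additive (AddChar (A j) ℂ) =>
      ∏ j ∈ χ.support, (((c j:ℝ)-1)⁻¹) ^ p) := by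
    apply summable_of_sum_le (c := Real.exp (∑' j, ((c j : ℝ) - 1) ^ (1 - p)))
    · intro χ
      exact Finset.prod_nonneg fun j _ => Real.rpow_nonneg (inv_nonneg.mpr (hcpos j).le) _
    · intro u
      set N := (u.sup fun χ0 => χ0.support.sup id) + 1 with hNdef
      have hN : ∀ χ0 ∈ u, ∀ j ∈ χ0.support, j < N := by
        intro χ0 hχ0 j hj
        exact Nat.lt_succ_of_le (le_trans (Finset.le_sup (f := id) hj)
          (Finset.le_sup (f := fun χ0 => χ0.support.sup id) hχ0))
      set w : ∀ j : Fin N, Additive (AddChar (A (j:ℕ)) ℂ) → ℝ :=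
        fun j ψ => if ψ = 0 then 1 else (((c (j:ℕ) :ℝ)-1)⁻¹) ^ p with hwdef
      have hwnn : ∀ (j : Fin N) ψ, 0 ≤ w j ψ := by
        intro j ψ
        rw [hwdef]
        dsimp only
        split_ifs
        · norm_num
        · exact Real.rpow_nonneg (inv_nonneg.mpr (hcpos _).le) _
      set Φ : (Π₀ j, Additive (AddChar (A j) ℂ)) → (∀ j : Fin N, Additive (AddChar (A (j:ℕ)) ℂ)) :=
        fun χ0 j => χ0 (j:ℕ) with hΦdef
      have hg : ∀ χ0 ∈ u, (∏ j ∈ χ0.support, (((c j:ℝ)-1)⁻¹) ^ p)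
          = ∏ j : Fin N, w j (Φ χ0 j) := by
        intro χ0 hχ0
        rw [← auxFilter χ0.support N (hN χ0 hχ0) (fun j => (((c j:ℝ)-1)⁻¹) ^ p),
          ← Fin.prod_univ_eq_prod_range (fun j => if j ∈ χ0.support then (((c j:ℝ)-1)⁻¹) ^ p else 1) N]
        apply Finset.prod_congr rfl
        intro j _
        simp only [hwdef, hΦdef]
        by_cases hj : (j:ℕ) ∈ χ0.support
        · rw [if_pos hj, if_neg (DFinsupp.mem_support_iff.mp hj)]
        · rw [if_neg hj, if_pos (DFinsupp.notMem_support_iff.mp hj)]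
      have hΦinj : Set.InjOn Φ u := by
        intro χ1 h1 χ2 h2' heq
        ext j : 1
        by_cases hj : j < N
        · exact congrFun heq ⟨j, hj⟩
        · have e1 : χ1 j = 0 := by
            by_contra h
            exact hj (hN χ1 h1 j (DFinsupp.mem_support_iff.mpr h))
          have e2 : χ2 j = 0 := by
            by_contra h
            exact hj (hN χ2 h2' j (DFinsupp.mem_support_iff.mpr h))
          rw [e1, e2]
      calc ∑ χ0 ∈ u, ∏ j ∈ χ0.support, (((c j:ℝ)-1)⁻¹) ^ p
          = ∑ χ0 ∈ u, ∏ j : Fin N, w j (Φ χ0 j) := Finset.sum_congr rfl hg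
        _ = ∑ y ∈ u.image Φ, ∏ j : Fin N, w j (y j) :=
            (Finset.sum_image (f := fun y : ∀ j : Fin N, Additive (AddChar (A (j:ℕ)) ℂ) =>
              ∏ j : Fin N, w j (y j)) (g := Φ) (fun a ha b hb h => hΦinj ha hb h)).symm
        _ ≤ ∑ y : ∀ j : Fin N, Additive (AddChar (A (j:ℕ)) ℂ), ∏ j : Fin N, w j (y j) :=
            Finset.sum_le_sum_of_subset_of_nonneg (Finset.subset_univ _)
              (fun y _ _ => Finset.prod_nonneg fun j _ => hwnn j _)
        _ = ∏ j : Fin N, ∑ ψ, w j ψ := (Fintype.prod_sum w).symm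
        _ ≤ ∏ j : Fin N, (1 + ((c (j:ℕ) : ℝ) - 1) ^ (1 - p)) := by
            apply Finset.prod_le_prod
            · intro j _
              exact Finset.sum_nonneg fun ψ _ => hwnn j ψ
            · intro j _
              have hcard : Fintype.card (Additive (AddChar (A (j:ℕ)) ℂ)) ≤ c (j:ℕ) := by
                rw [Fintype.card_congr Additive.toMul, hc]
                exact AddChar.card_addChar_le _ _
              have hcard1 : 1 ≤ Fintype.card (Additive (AddChar (A (j:ℕ)) ℂ)) :=
                Fintype.card_pos
              have hsumw : ∑ ψ, w j ψ
                  = 1 + ((Fintype.card (Additive (AddChar (A (j:ℕ)) ℂ)) - 1 : ℕ) : ℝ)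
                    * (((c (j:ℕ) :ℝ)-1)⁻¹) ^ p := by
                rw [← Finset.add_sum_erase Finset.univ (w j) (Finset.mem_univ 0)]
                have h0 : w j 0 = 1 := by simp [hwdef]
                have hrest : ∑ ψ ∈ Finset.univ.erase (0 : Additive (AddChar (A (j:ℕ)) ℂ)), w j ψ
                    = ((Fintype.card (Additive (AddChar (A (j:ℕ)) ℂ)) - 1 : ℕ) : ℝ)
                      * (((c (j:ℕ) :ℝ)-1)⁻¹) ^ p := by
                  rw [Finset.sum_congr rfl (fun ψ hψ =>
                    show w j ψ = (((c (j:ℕ) :ℝ)-1)⁻¹) ^ p by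
                      simp [hwdef, Finset.ne_of_mem_erase hψ]),
                    Finset.sum_const, Finset.card_erase_of_mem (Finset.mem_univ 0),
                    Finset.card_univ, nsmul_eq_mul]
                rw [h0, hrest]
              rw [hsumw]
              have hb : (0:ℝ) ≤ (((c (j:ℕ) :ℝ)-1)⁻¹) ^ p :=
                Real.rpow_nonneg (inv_nonneg.mpr (hcpos _).le) _
              have hcc : ((Fintype.card (Additive (AddChar (A (j:ℕ)) ℂ)) - 1 : ℕ) : ℝ)
                  ≤ (c (j:ℕ) : ℝ) - 1 := by
                rw [Nat.cast_sub hcard1]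
                have : (Fintype.card (Additive (AddChar (A (j:ℕ)) ℂ)) : ℝ) ≤ (c (j:ℕ) : ℝ) := by
                  exact_mod_cast hcard
                push_cast
                linarith
              have heq : ((c (j:ℕ) : ℝ) - 1) * (((c (j:ℕ) :ℝ)-1)⁻¹) ^ p
                  = ((c (j:ℕ) : ℝ) - 1) ^ (1 - p) := by
                rw [Real.inv_rpow (hcpos _).le, ← Real.rpow_neg (hcpos _).le,
                  show (1:ℝ) - p = 1 + -p from by ring, Real.rpow_add (hcpos _), Real.rpow_one]
              have hm := mul_le_mul_of_nonneg_right hcc hb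
              rw [heq] at hm
              linarith
        _ ≤ ∏ j : Fin N, Real.exp (((c (j:ℕ) : ℝ) - 1) ^ (1 - p)) := by
            apply Finset.prod_le_prod
            · intro j _
              have := hε (j:ℕ)
              linarith
            · intro j _
              have := Real.add_one_le_exp (((c (j:ℕ) : ℝ) - 1) ^ (1 - p))
              linarith
        _ = Real.exp (∑ j : Fin N, ((c (j:ℕ) : ℝ) - 1) ^ (1 - p)) := (Real.exp_sum _ _).symm
        _ = Real.exp (∑ j ∈ Finset.range N, ((c j : ℝ) - 1) ^ (1 - p)) := by
            rw [Fin.sum_univ_eq_sum_range (fun j => ((c j : ℝ) - 1) ^ (1 - p)) N]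
        _ ≤ Real.exp (∑' j, ((c j : ℝ) - 1) ^ (1 - p)) :=
            Real.exp_le_exp.mpr (Summable.sum_le_tsum _ (fun j _ => hε j) hsum)
  exact (summable_congr key).mpr key2
end
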